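/- Let A be a finite nonempty set, R : A → ℝ, and v : A → ℝ. Define the regret-matching strategy σ : A → ℝ by σ(a) = max(R(a),0) / ∑_{b∈A} max(R(b),0) if ∑_{b∈A} max(R(b),0) > 0, and σ(a) = 1/|A| otherwise. Define r(a) = v(a) − ∑_{b∈A} σ(b)·v(b). Then ∑_{a∈A} max(R(a),0) · r(a) = 0. -/
import Mathlib


/-- Orthogonality identity for regret matching: when the strategy `σ` is proportional to
the positive parts of the accumulated regrets `R` (uniform fallback otherwise), the
positive-part-weighted sum of the new instantaneous regrets is exactly zero. -/
theorem tracer_regret_matching_orthogonality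
    (A : Type*) [Fintype A] [Nonempty A]
    (R v σ r : A → ℝ)
    (hσ : ∀ a, σ a =
      if 0 < ∑ b, max (R b) 0
      then max (R a) 0 / ∑ b, max (R b) 0
      else 1 / (Fintype.card A : ℝ))
    (hr : ∀ a, r a = v a - ∑ b, σ b * v b) :
    ∑ a, max (R a) 0 * r a = 0 := by
  set S := ∑ b, max (R b) 0 with hS
  by_cases h : 0 < S
  · have hσ' : ∀ a, σ a = max (R a) 0 / S := fun a => by rw [hσ a, if_pos h]
    have key : ∑ a, max (R a) 0 * v a = S * ∑ b, σ b * v b := by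
      rw [Finset.mul_sum]
      refine Finset.sum_congr rfl fun a _ => ?_
      rw [hσ' a]; field_simp
    calc ∑ a, max (R a) 0 * r a
        = ∑ a, (max (R a) 0 * v a - max (R a) 0 * ∑ b, σ b * v b) := by
          refine Finset.sum_congr rfl fun a _ => ?_
          rw [hr a]; ring
      _ = ∑ a, max (R a) 0 * v a - S * ∑ b, σ b * v b := by
          rw [Finset.sum_sub_distrib, ← Finset.sum_mul]
      _ = 0 := by rw [key]; ring
  · have hzero : ∀ a ∈ Finset.univ, max (R a) 0 = 0 := by
      intro a _
      have hnn : ∀ b ∈ Finset.univ (α := A), (0:ℝ) ≤ max (R b) 0 :=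
        fun b _ => le_max_right _ _
      have : S ≤ 0 := le_of_not_gt h
      have := (Finset.sum_eq_zero_iff_of_nonneg hnn).mp
        (le_antisymm this (Finset.sum_nonneg hnn))
      exact this a (Finset.mem_univ a)
    refine Finset.sum_eq_zero fun a _ => ?_
    rw [hzero a (Finset.mem_univ a), zero_mul]
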